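/- arXiv:2010.11447 — 3 statements merged into one kernel-verified Lean document; each statement's English description precedes it below -/
import Mathlib

section
/- Let n, k, j be positive integers. Let K be an n×n real matrix, W and C n×k real matrices, R an invertible k×k real matrix with K·W = C·R, V_{j+1} an n×(j+1) real matrix with first column v₁, V_j the n×j matrix of its first j columns, B_j a k×j real matrix, and T̲_j a (j+1)×j real matrix such that K·V_j = C·B_j + V_{j+1}·T̲_j. Let u₀, f ∈ ℝⁿ with f − K·u₀ = β·v₁ for some β ∈ ℝ. Then for all y ∈ ℝʲ and z ∈ ℝᵏ, setting u_j = u₀ + W·z + V_j·y, one has f − K·u_j = V_{j+1}·(β·e₁ − T̲_j·y) − C·(B_j·y + R·z), where e₁ is the first standard basis vector of ℝ^{j+1}. -/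
open Matrix

/-- First standard basis vector of `ℝ^{j+1}`. -/
def e₁ (j : ℕ) : Fin (j + 1) → ℝ := fun i => if i = 0 then 1 else 0

/-- In recycling MINRES, with the augmented Lanczos relation
`K·V_j = C·B_j + V_{j+1}·T̲_j` and residual `f − K·u₀ = β·v₁`, the residual of
`u_j = u₀ + W·z + V_j·y` is
`V_{j+1}·(β·e₁ − T̲_j·y) − C·(B_j·y + R·z)`. -/
theorem recycling_minres_residual_form
    (n k j : ℕ) (hn : 0 < n) (hk : 0 < k) (hj : 0 < j)
    (K : Matrix (Fin n) (Fin n) ℝ) (W C : Matrix (Fin n) (Fin k) ℝ)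
    (R : Matrix (Fin k) (Fin k) ℝ) [Invertible R] (hKW : K * W = C * R)
    (V : Matrix (Fin n) (Fin (j + 1)) ℝ)
    (B : Matrix (Fin k) (Fin j) ℝ) (T : Matrix (Fin (j + 1)) (Fin j) ℝ)
    (hLanczos : K * V.submatrix id Fin.castSucc = C * B + V * T)
    (u₀ f : Fin n → ℝ) (β : ℝ)
    (hres : f - K.mulVec u₀ = β • fun r => V r 0) :
    ∀ (y : Fin j → ℝ) (z : Fin k → ℝ),
      f - K.mulVec (u₀ + W.mulVec z + (V.submatrix id Fin.castSucc).mulVec y) =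
        V.mulVec (β • e₁ j - T.mulVec y) - C.mulVec (B.mulVec y + R.mulVec z) := by
  intro y z
  have hW : K.mulVec (W.mulVec z) = C.mulVec (R.mulVec z) := by
    rw [mulVec_mulVec, mulVec_mulVec, hKW]
  have hV : K.mulVec ((V.submatrix id Fin.castSucc).mulVec y)
      = C.mulVec (B.mulVec y) + V.mulVec (T.mulVec y) := by
    rw [mulVec_mulVec, mulVec_mulVec, mulVec_mulVec, hLanczos, add_mulVec]
  have hE : V.mulVec (β • e₁ j) = β • fun r => V r 0 := by
    funext r
    simp [mulVec, dotProduct, e₁, mul_ite, mul_comm]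
  rw [mulVec_add, mulVec_add, mulVec_sub, mulVec_add, hW, hV, hE, ← hres]
  module
end

section
/- Let n, m, k be positive integers with k ≤ m. Let K be an n×n real matrix, U an n×(m+1) real matrix with Uᵀ·U = I_{m+1}, partitioned as U = [U_a | U_c] with U_a its first k columns, U_m the first m columns of U, H' an (m+1)×m real matrix, and G an n×m real matrix with K·U_m = U·H' + G and U_aᵀ·G = 0. Define H = Uᵀ·K·U_m and R_new = K·U_m − U·H. Then R_new = G − U_c·(U_cᵀ·G) and Uᵀ·R_new = 0; moreover, every column of G that is zero gives a zero column of R_new (so if only the first k−1 columns of G are nonzero, only the first k−1 columns of R_new can be nonzero). -/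
open Matrix

/-- In the warm-start Krylov–Schur algorithm, the new residual
`R_new = K·U_m − U·H` (with corrected Rayleigh quotient `H = Uᵀ·K·U_m`)
equals `G − U_c·(U_cᵀ·G)`, is orthogonal to `range(U)`, and each zero column
of `G` gives a zero column of `R_new`. -/
theorem warm_start_new_residual
    (n m k : ℕ) (hn : 0 < n) (hk : 0 < k) (hm : 0 < m) (hkm : k ≤ m)
    (K : Matrix (Fin n) (Fin n) ℝ)
    (U : Matrix (Fin n) (Fin (m + 1)) ℝ) (hU : Uᵀ * U = 1)
    (H' : Matrix (Fin (m + 1)) (Fin m) ℝ) (G : Matrix (Fin n) (Fin m) ℝ)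
    (hKU : K * U.submatrix id Fin.castSucc = U * H' + G)
    (hG : (U.submatrix id fun i : Fin k =>
        (⟨i.1, by have := i.2; omega⟩ : Fin (m + 1)))ᵀ * G = 0)
    (H : Matrix (Fin (m + 1)) (Fin m) ℝ)
    (hH : H = Uᵀ * K * U.submatrix id Fin.castSucc)
    (Rnew : Matrix (Fin n) (Fin m) ℝ)
    (hRnew : Rnew = K * U.submatrix id Fin.castSucc - U * H) :
    (Rnew =
      G - (U.submatrix id fun i : Fin (m + 1 - k) =>
            (⟨k + i.1, by have := i.2; omega⟩ : Fin (m + 1))) *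
          ((U.submatrix id fun i : Fin (m + 1 - k) =>
            (⟨k + i.1, by have := i.2; omega⟩ : Fin (m + 1)))ᵀ * G)) ∧
    Uᵀ * Rnew = 0 ∧
    (∀ c : Fin m, (∀ i : Fin n, G i c = 0) → ∀ i : Fin n, Rnew i c = 0) := by
  -- Key: Rnew = G - U * (Uᵀ * G)
  have key : Rnew = G - U * (Uᵀ * G) := by
    rw [hRnew, hH, Matrix.mul_assoc Uᵀ K _, hKU, Matrix.mul_add Uᵀ,
      ← Matrix.mul_assoc Uᵀ U H', hU, Matrix.one_mul, Matrix.mul_add U]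
    abel
  -- column-wise inner product with U_a vanishes
  have hGa : ∀ (j : Fin k) (c : Fin m),
      ∑ x : Fin n, U x ⟨j.1, by have := j.2; omega⟩ * G x c = 0 := by
    intro j c
    have := congrFun (congrFun hG j) c
    simpa [Matrix.mul_apply, Matrix.transpose_apply, Matrix.submatrix_apply] using this
  have hsplit : U * (Uᵀ * G) =
      (U.submatrix id fun i : Fin (m + 1 - k) =>
            (⟨k + i.1, by have := i.2; omega⟩ : Fin (m + 1))) *
          ((U.submatrix id fun i : Fin (m + 1 - k) =>
            (⟨k + i.1, by have := i.2; omega⟩ : Fin (m + 1)))ᵀ * G) := by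
    ext i c
    have hmk : m + 1 = k + (m + 1 - k) := by omega
    rw [Matrix.mul_apply, Matrix.mul_apply]
    have hsum : ∀ f : Fin (m + 1) → ℝ,
        ∑ j : Fin (m + 1), f j =
          (∑ j : Fin k, f ⟨j.1, by have := j.2; omega⟩) +
          ∑ j : Fin (m + 1 - k), f ⟨k + j.1, by have := j.2; omega⟩ := by
      intro f
      rw [Fintype.sum_equiv (finCongr hmk) f (fun j => f (finCongr hmk.symm j))
        (by intro x; simp)]
      rw [Fin.sum_univ_add]
      congr 1 <;> apply Finset.sum_congr rfl <;> intro j _ <;> congr 1 <;>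
        ext <;> simp [Fin.castAdd, Fin.natAdd]
    rw [hsum]
    have h1 : (∑ j : Fin k,
        U i (⟨j.1, by have := j.2; omega⟩ : Fin (m + 1)) *
          (Uᵀ * G) (⟨j.1, by have := j.2; omega⟩ : Fin (m + 1)) c) = 0 := by
      apply Finset.sum_eq_zero
      intro j _
      have : (Uᵀ * G) (⟨j.1, by have := j.2; omega⟩ : Fin (m + 1)) c = 0 := by
        rw [Matrix.mul_apply]
        simpa [Matrix.transpose_apply] using hGa j c
      rw [this, mul_zero]
    rw [h1, zero_add]
    apply Finset.sum_congr rfl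
    intro j _
    simp [Matrix.mul_apply, Matrix.transpose_apply, Matrix.submatrix_apply]
  refine ⟨by rw [key, hsplit], ?_, ?_⟩
  · rw [key, Matrix.mul_sub, ← Matrix.mul_assoc, ← Matrix.mul_assoc, hU,
      Matrix.one_mul, sub_self]
  · intro c hc i
    rw [key]
    simp only [Matrix.sub_apply, Matrix.mul_apply]
    have : ∀ j : Fin (m + 1), (Uᵀ * G) j c = 0 := by
      intro j
      rw [Matrix.mul_apply]
      apply Finset.sum_eq_zero
      intro x _
      rw [Matrix.transpose_apply, hc x, mul_zero]
    simp [hc]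
end

section
/- Let n, k be positive integers and m ≥ k. Let R̃ be an n×k real matrix, P a k×(k−1) real matrix with Pᵀ·P = I_{k−1}, and U_c an n×(m+1−k) real matrix with U_cᵀ·U_c = I. Set R = R̃·P, let G = [R | 0] be the n×m matrix whose first k−1 columns are R and remaining columns are zero, and set R_new = G − U_c·(U_cᵀ·G). Then ‖R_new‖_F ≤ ‖R‖_F ≤ ‖R̃‖_F, where ‖·‖_F denotes the Frobenius norm; i.e., each restart of the warm-start Krylov–Schur cycle does not increase the Frobenius norm of the residual matrix. -/
open Matrix

/-- Frobenius norm of a real matrix. -/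
noncomputable def frobNorm {a b : ℕ} (A : Matrix (Fin a) (Fin b) ℝ) : ℝ :=
  Real.sqrt (∑ i, ∑ j, A i j ^ 2)

lemma trace_transpose_mul_self {a b : ℕ} (A : Matrix (Fin a) (Fin b) ℝ) :
    Matrix.trace (Aᵀ * A) = ∑ i, ∑ j, A i j ^ 2 := by
  simp [Matrix.trace, Matrix.diag, Matrix.mul_apply, sq]
  exact Finset.sum_comm

lemma trace_transpose_mul_self_nonneg {a b : ℕ} (A : Matrix (Fin a) (Fin b) ℝ) :
    0 ≤ Matrix.trace (Aᵀ * A) := by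
  rw [trace_transpose_mul_self]; positivity

/-- Each restart of the warm-start Krylov–Schur cycle does not
increase the Frobenius norm of the residual matrix:
`‖R_new‖_F ≤ ‖R‖_F ≤ ‖R̃‖_F`, where `R = R̃·P` with `P` having orthonormal
columns, `G = [R | 0]`, and `R_new = G − U_c·(U_cᵀ·G)`. -/
theorem warm_start_residual_norm_nonincreasing
    (n k m : ℕ) (hn : 0 < n) (hk : 0 < k) (hkm : k ≤ m)
    (Rt : Matrix (Fin n) (Fin k) ℝ)
    (P : Matrix (Fin k) (Fin (k - 1)) ℝ) (hP : Pᵀ * P = 1)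
    (Uc : Matrix (Fin n) (Fin (m + 1 - k)) ℝ) (hUc : Ucᵀ * Uc = 1)
    (R : Matrix (Fin n) (Fin (k - 1)) ℝ) (hR : R = Rt * P)
    (G : Matrix (Fin n) (Fin m) ℝ)
    (hG : G = Matrix.of fun (i : Fin n) (c : Fin m) =>
      if h : c.1 < k - 1 then R i ⟨c.1, h⟩ else 0)
    (Rnew : Matrix (Fin n) (Fin m) ℝ)
    (hRnew : Rnew = G - Uc * (Ucᵀ * G)) :
    frobNorm Rnew ≤ frobNorm R ∧ frobNorm R ≤ frobNorm Rt := by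
  -- S(G) = S(R)
  have hkm' : k - 1 ≤ m := le_trans (Nat.sub_le k 1) hkm
  have hGR : ∑ i, ∑ c, G i c ^ 2 = ∑ i, ∑ j, R i j ^ 2 := by
    refine Finset.sum_congr rfl fun i _ => ?_
    rw [← Finset.sum_subset (Finset.subset_univ (Finset.univ.map (Fin.castLEEmb hkm')))]
    · rw [Finset.sum_map]
      refine Finset.sum_congr rfl fun j _ => ?_
      have hj : (Fin.castLEEmb hkm' j).1 < k - 1 := j.2
      simp only [hG, Matrix.of_apply, dif_pos hj]
      have hjj : (⟨((Fin.castLEEmb hkm') j).1, hj⟩ : Fin (k-1)) = j := Fin.ext rfl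
      rw [hjj]
    · intro c _ hc
      have hlt : ¬ c.1 < k - 1 := by
        intro h
        exact hc (Finset.mem_map.mpr ⟨⟨c.1, h⟩, Finset.mem_univ _, rfl⟩)
      simp [hG, hlt]
  -- Part 2 : S(R) ≤ S(Rt)
  have hPPt : Pᵀ * P = 1 := hP
  have key2 : ∑ i, ∑ j, R i j ^ 2 ≤ ∑ i, ∑ j, Rt i j ^ 2 := by
    have h0 := trace_transpose_mul_self_nonneg (Rt - Rt * P * Pᵀ)
    have hexp : Matrix.trace ((Rt - Rt * P * Pᵀ)ᵀ * (Rt - Rt * P * Pᵀ))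
        = Matrix.trace (Rtᵀ * Rt) - Matrix.trace ((Rt * P)ᵀ * (Rt * P)) := by
      have h1 : Matrix.trace (Rtᵀ * (Rt * P * Pᵀ))
          = Matrix.trace ((Rt * P)ᵀ * (Rt * P)) := by
        rw [show Rtᵀ * (Rt * P * Pᵀ) = (Rtᵀ * (Rt * P)) * Pᵀ by
          simp [Matrix.mul_assoc]]
        rw [Matrix.trace_mul_comm]
        simp [Matrix.transpose_mul, Matrix.mul_assoc]
      have h2 : Matrix.trace ((Rt * P * Pᵀ)ᵀ * Rt)
          = Matrix.trace ((Rt * P)ᵀ * (Rt * P)) := by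
        rw [show (Rt * P * Pᵀ)ᵀ * Rt = P * ((Rt * P)ᵀ * Rt) by
          simp [Matrix.transpose_mul, Matrix.mul_assoc]]
        rw [Matrix.trace_mul_comm]
        simp [Matrix.transpose_mul, Matrix.mul_assoc]
      have h3 : Matrix.trace ((Rt * P * Pᵀ)ᵀ * (Rt * P * Pᵀ))
          = Matrix.trace ((Rt * P)ᵀ * (Rt * P)) := by
        have : (Rt * P * Pᵀ)ᵀ * (Rt * P * Pᵀ) = P * ((Rt * P)ᵀ * (Rt * P) * Pᵀ) := by
          simp [Matrix.transpose_mul, Matrix.mul_assoc]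
        rw [this, Matrix.trace_mul_comm]
        rw [show (Rt * P)ᵀ * (Rt * P) * Pᵀ * P = (Rt * P)ᵀ * (Rt * P) * (Pᵀ * P) by
          simp [Matrix.mul_assoc]]
        rw [hP, Matrix.mul_one]
      rw [Matrix.transpose_sub, Matrix.sub_mul, Matrix.mul_sub, Matrix.mul_sub,
        Matrix.trace_sub, Matrix.trace_sub, Matrix.trace_sub, h1, h2, h3]
      ring
    rw [hexp] at h0
    rw [trace_transpose_mul_self, trace_transpose_mul_self, ← hR] at h0
    linarith
  -- Part 1 : S(Rnew) ≤ S(G)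
  have key1 : ∑ i, ∑ j, Rnew i j ^ 2 ≤ ∑ i, ∑ c, G i c ^ 2 := by
    have h0 := trace_transpose_mul_self_nonneg (Ucᵀ * G)
    have hexp : Matrix.trace (Rnewᵀ * Rnew)
        = Matrix.trace (Gᵀ * G) - Matrix.trace ((Ucᵀ * G)ᵀ * (Ucᵀ * G)) := by
      have hM : (Uc * (Ucᵀ * G))ᵀ * (Uc * (Ucᵀ * G)) = (Ucᵀ * G)ᵀ * (Ucᵀ * G) := by
        rw [Matrix.transpose_mul]
        rw [show (Ucᵀ * G)ᵀ * Ucᵀ * (Uc * (Ucᵀ * G))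
            = (Ucᵀ * G)ᵀ * ((Ucᵀ * Uc) * (Ucᵀ * G)) by simp [Matrix.mul_assoc]]
        rw [hUc, Matrix.one_mul]
      have h1 : Matrix.trace (Gᵀ * (Uc * (Ucᵀ * G)))
          = Matrix.trace ((Ucᵀ * G)ᵀ * (Ucᵀ * G)) := by
        rw [show Gᵀ * (Uc * (Ucᵀ * G)) = (Ucᵀ * G)ᵀ * (Ucᵀ * G) by
          simp [Matrix.transpose_mul, Matrix.mul_assoc]]
      have h2 : Matrix.trace ((Uc * (Ucᵀ * G))ᵀ * G)
          = Matrix.trace ((Ucᵀ * G)ᵀ * (Ucᵀ * G)) := by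
        rw [show (Uc * (Ucᵀ * G))ᵀ * G = (Ucᵀ * G)ᵀ * (Ucᵀ * G) by
          simp [Matrix.transpose_mul, Matrix.mul_assoc]]
      rw [hRnew, Matrix.transpose_sub, Matrix.sub_mul, Matrix.mul_sub, Matrix.mul_sub,
        Matrix.trace_sub, Matrix.trace_sub, Matrix.trace_sub, hM, h1, h2]
      ring
    rw [trace_transpose_mul_self] at h0
    rw [trace_transpose_mul_self, trace_transpose_mul_self, trace_transpose_mul_self] at hexp
    linarith
  refine ⟨?_, ?_⟩
  · exact Real.sqrt_le_sqrt (by linarith [hGR ▸ key1])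
  · exact Real.sqrt_le_sqrt key2
end
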